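/- Define recursively fma(j,i) for 1 ≤ i ≤ j ≤ q by fma(i,i) = Eᵢ·min(nᵢ,mᵢ) and for j > i, fma(j,i) = min over i ≤ k < j of min{ fma(j,k+1)+fma(k,i)+m_j·m_k·n_i, fma(j,k+1)+m_j·∑_{ν=i}^{k}E_ν, fma(k,i)+n_i·∑_{ν=k+1}^{j}E_ν }. Then fma(j,i) ≤ n_i·∑_{ν=i}^{j} E_ν (the cost of homogeneous tangent mode) and fma(j,i) ≤ m_j·∑_{ν=i}^{j} E_ν (the cost of homogeneous adjoint mode). -/

import Mathlib

/-- The dynamic programming recurrence (dp2) for Generalized Dense Jacobian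
Chain Product Bracketing: `fma n m E j i` is the optimal fma cost for the
subchain with factors `i,…,j`. -/
def fma (n m E : ℕ → ℕ) (j i : ℕ) : ℕ :=
  if h : j ≤ i then E i * min (n i) (m i)
  else
    ((Finset.Ico i j).attach).inf'
      (Finset.attach_nonempty_iff.mpr (Finset.nonempty_Ico.mpr (lt_of_not_ge h)))
      fun k =>
        min (fma n m E j (k.1 + 1) + fma n m E k.1 i + m j * m k.1 * n i)
          (min (fma n m E j (k.1 + 1) + m j * ∑ ν ∈ Finset.Icc i k.1, E ν)
            (fma n m E k.1 i + n i * ∑ ν ∈ Finset.Icc (k.1 + 1) j, E ν))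
termination_by j - i
decreasing_by
  all_goals
    have hk := Finset.mem_Ico.mp k.2
    omega


lemma fma_self (n m E : ℕ → ℕ) (i : ℕ) : fma n m E i i = E i * min (n i) (m i) := by
  rw [fma]; simp

lemma sum_Icc_split_left (E : ℕ → ℕ) {i j : ℕ} (h : i ≤ j) :
    ∑ ν ∈ Finset.Icc i j, E ν = E i + ∑ ν ∈ Finset.Icc (i+1) j, E ν := by
  have hins : Finset.Icc i j = insert i (Finset.Icc (i+1) j) := by
    ext x; simp [Finset.mem_Icc, Finset.mem_insert]; omega
  rw [hins, Finset.sum_insert (by simp [Finset.mem_Icc])]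

lemma sum_Icc_split_right (E : ℕ → ℕ) {i j : ℕ} (h : i ≤ j) (hj : 1 ≤ j) :
    ∑ ν ∈ Finset.Icc i j, E ν = (∑ ν ∈ Finset.Icc i (j-1), E ν) + E j := by
  have hins : Finset.Icc i j = insert j (Finset.Icc i (j-1)) := by
    ext x; simp [Finset.mem_Icc, Finset.mem_insert]; omega
  rw [hins, Finset.sum_insert (by simp [Finset.mem_Icc]; omega)]
  omega

theorem fma_le_homogeneous (q : ℕ) (n m E : ℕ → ℕ) (hq : 0 < q)
    (hn : ∀ ν, 1 ≤ ν → ν ≤ q → 0 < n ν)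
    (hm : ∀ ν, 1 ≤ ν → ν ≤ q → 0 < m ν)
    (hE : ∀ ν, 1 ≤ ν → ν ≤ q → 0 < E ν)
    (hdim : ∀ ν, 1 ≤ ν → ν < q → m ν = n (ν + 1))
    (i j : ℕ) (hi : 1 ≤ i) (hij : i ≤ j) (hjq : j ≤ q) :
    fma n m E j i ≤ n i * ∑ ν ∈ Finset.Icc i j, E ν ∧
    fma n m E j i ≤ m j * ∑ ν ∈ Finset.Icc i j, E ν := by
  rcases Nat.eq_or_lt_of_le hij with rfl | hlt
  · rw [fma_self]
    simp only [Finset.Icc_self, Finset.sum_singleton]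
    constructor
    · calc E i * min (n i) (m i) ≤ E i * n i := by
            exact Nat.mul_le_mul_left _ (min_le_left _ _)
        _ = n i * E i := Nat.mul_comm _ _
    · calc E i * min (n i) (m i) ≤ E i * m i := by
            exact Nat.mul_le_mul_left _ (min_le_right _ _)
        _ = m i * E i := Nat.mul_comm _ _
  · have hnot : ¬ j ≤ i := not_le.mpr hlt
    rw [fma, dif_neg hnot]
    have hmemi : i ∈ Finset.Ico i j := Finset.mem_Ico.mpr ⟨le_refl i, hlt⟩
    have hmemj : j - 1 ∈ Finset.Ico i j := Finset.mem_Ico.mpr ⟨by omega, by omega⟩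
    constructor
    · -- tangent: use k = i, third option
      refine le_trans (Finset.inf'_le _ (Finset.mem_attach _ ⟨i, hmemi⟩)) ?_
      refine le_trans (min_le_right _ _) (le_trans (min_le_right _ _) ?_)
      simp only [fma_self]
      rw [sum_Icc_split_left E hij, Nat.mul_add]
      have : E i * min (n i) (m i) ≤ n i * E i := by
        calc E i * min (n i) (m i) ≤ E i * n i :=
              Nat.mul_le_mul_left _ (min_le_left _ _)
          _ = n i * E i := Nat.mul_comm _ _
      omega
    · -- adjoint: use k = j - 1, second option
      refine le_trans (Finset.inf'_le _ (Finset.mem_attach _ ⟨j - 1, hmemj⟩)) ?_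
      refine le_trans (min_le_right _ _) (le_trans (min_le_left _ _) ?_)
      rw [show ((⟨j - 1, hmemj⟩ : {x // x ∈ Finset.Ico i j}) : ℕ) = j - 1 from rfl]
      have hj1 : j - 1 + 1 = j := by omega
      rw [hj1, fma_self]
      rw [sum_Icc_split_right E hij (by omega), Nat.mul_add]
      have : E j * min (n j) (m j) ≤ m j * E j := by
        calc E j * min (n j) (m j) ≤ E j * m j :=
              Nat.mul_le_mul_left _ (min_le_right _ _)
          _ = m j * E j := Nat.mul_comm _ _
      omega
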